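/- Let D(β;λ) := ψ²(δβ²ρ+1) + (1-ρ²)(1-δβ²ρ)(s/τ) and F(β;λ) := δβ² + ψ²ρ(1-δ²β⁴)/D(β;λ), where λ = (δ,ψ,ρ,s,τ). Fix λ₀ = (δ₀,ψ₀,ρ₀,s₀,τ₀) with |δ₀| < 1, |ρ₀| < 1, ψ₀ ≠ 0, s₀ > 0, τ₀ > 0. Then there exists a constant c > 0 such that for every β ∈ [0,1], the Euclidean norm of the gradient of λ ↦ F(β;λ) at λ₀ (the vector of partial derivatives with respect to δ, ψ, ρ, s, τ) is at least c. -/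

import Mathlib

/-- The fixed-point map `F(β;λ)` with parameter vector
`λ = (δ,ψ,ρ,s,τ) ∈ ℝ⁵` (Euclidean space, so `‖·‖` is the Euclidean norm). -/
noncomputable def Ffun (β : ℝ) (l : EuclideanSpace ℝ (Fin 5)) : ℝ :=
  l 0 * β ^ 2 +
    (l 1) ^ 2 * l 2 * (1 - (l 0) ^ 2 * β ^ 4) /
      ((l 1) ^ 2 * (l 0 * β ^ 2 * l 2 + 1) +
        (1 - (l 2) ^ 2) * (1 - l 0 * β ^ 2 * l 2) * (l 3 / l 4))

open scoped RealInnerProductSpace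

theorem grad_lb {f : EuclideanSpace ℝ (Fin 5) → ℝ} {x : EuclideanSpace ℝ (Fin 5)}
    (hf : DifferentiableAt ℝ f x) (i : Fin 5) {e : ℝ}
    (hE : HasDerivAt (fun t : ℝ => f (x + t • EuclideanSpace.single i (1:ℝ))) e 0) :
    |e| ≤ ‖gradient f x‖ := by
  have hg : HasGradientAt f (gradient f x) x := hf.hasGradientAt
  have hfd : HasFDerivAt f (InnerProductSpace.toDual ℝ _ (gradient f x)) x :=
    hg.hasFDerivAt
  have hline : HasDerivAt (fun t : ℝ => x + t • EuclideanSpace.single i (1:ℝ))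
      (EuclideanSpace.single i (1:ℝ)) 0 := by
    simpa using ((hasDerivAt_id (0:ℝ)).smul_const (EuclideanSpace.single i (1:ℝ))).const_add x
  have h2 := HasFDerivAt.comp_hasDerivAt 0 (by simpa using hfd) hline
  have he : e = ⟪gradient f x, EuclideanSpace.single i (1:ℝ)⟫ := by
    have := hE.unique h2
    simpa [InnerProductSpace.toDual_apply_apply] using this
  rw [he]
  calc |⟪gradient f x, EuclideanSpace.single i (1:ℝ)⟫|
      ≤ ‖gradient f x‖ * ‖EuclideanSpace.single i (1:ℝ)‖ := abs_real_inner_le_norm _ _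
    _ = ‖gradient f x‖ := by simp [EuclideanSpace.norm_single]

set_option maxHeartbeats 1600000 in
/-- If `|δ₀| < 1`, `|ρ₀| < 1`, `ψ₀ ≠ 0`, `s₀ > 0`, `τ₀ > 0`, then the Euclidean norm of
the gradient of `λ ↦ F(β;λ)` at `λ₀` is bounded below by some `c > 0`,
uniformly over `β ∈ [0,1]`. -/
theorem gradient_F_uniform_lower_bound (lam0 : EuclideanSpace ℝ (Fin 5))
    (hδ : |lam0 0| < 1) (hρ : |lam0 2| < 1) (hψ : lam0 1 ≠ 0)
    (hs : 0 < lam0 3) (hτ : 0 < lam0 4) :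
    ∃ c > 0, ∀ β ∈ Set.Icc (0 : ℝ) 1,
      c ≤ ‖gradient (fun l => Ffun β l) lam0‖ := by
  obtain ⟨hdl, hdu⟩ := abs_lt.mp hδ
  obtain ⟨hrl, hru⟩ := abs_lt.mp hρ
  have hst : 0 < lam0 3 / lam0 4 := div_pos hs hτ
  have hψ2 : 0 < (lam0 1) ^ 2 := by positivity
  have hδ2 : (lam0 0) ^ 2 < 1 := by nlinarith
  have hρ2 : (lam0 2) ^ 2 < 1 := by nlinarith
  have hdr : |lam0 0 * lam0 2| < 1 := by
    rw [abs_mul]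
    nlinarith [abs_nonneg (lam0 0), abs_nonneg (lam0 2), abs_lt.mpr ⟨hdl, hdu⟩,
      abs_lt.mpr ⟨hrl, hru⟩]
  -- facts for β in [0,1]
  have hbb : ∀ β ∈ Set.Icc (0:ℝ) 1, |lam0 0 * β ^ 2 * lam0 2| ≤ |lam0 0 * lam0 2| := by
    intro β hβ
    have hb2 : β ^ 2 ≤ 1 := by nlinarith [hβ.1, hβ.2]
    calc |lam0 0 * β ^ 2 * lam0 2| = |lam0 0 * lam0 2| * β ^ 2 := by
          rw [show lam0 0 * β ^ 2 * lam0 2 = lam0 0 * lam0 2 * β ^ 2 by ring, abs_mul,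
            abs_of_nonneg (by positivity : (0:ℝ) ≤ β ^ 2)]
      _ ≤ |lam0 0 * lam0 2| * 1 := mul_le_mul_of_nonneg_left hb2 (abs_nonneg _)
      _ = |lam0 0 * lam0 2| := mul_one _
  have hDpos : ∀ β ∈ Set.Icc (0:ℝ) 1,
      0 < (lam0 1) ^ 2 * (lam0 0 * β ^ 2 * lam0 2 + 1) +
        (1 - (lam0 2) ^ 2) * (1 - lam0 0 * β ^ 2 * lam0 2) * (lam0 3 / lam0 4) := by
    intro β hβ
    obtain ⟨hx1, hx2⟩ := abs_lt.mp (lt_of_le_of_lt (hbb β hβ) hdr)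
    have h1 : 0 < (lam0 1) ^ 2 * (lam0 0 * β ^ 2 * lam0 2 + 1) :=
      mul_pos hψ2 (by linarith)
    have h2 : 0 ≤ (1 - (lam0 2) ^ 2) * (1 - lam0 0 * β ^ 2 * lam0 2) * (lam0 3 / lam0 4) := by
      apply mul_nonneg (mul_nonneg (by linarith) (by linarith)) hst.le
    linarith
  have hdiff : ∀ β ∈ Set.Icc (0:ℝ) 1, DifferentiableAt ℝ (fun l => Ffun β l) lam0 := by
    intro β hβ
    have hD := (hDpos β hβ).ne'
    have h0 : ∀ i, DifferentiableAt ℝ (fun l : EuclideanSpace ℝ (Fin 5) => l i) lam0 :=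
      fun i => (EuclideanSpace.proj i : EuclideanSpace ℝ (Fin 5) →L[ℝ] ℝ).differentiableAt
    have hden : DifferentiableAt ℝ (fun l : EuclideanSpace ℝ (Fin 5) =>
        (l 1) ^ 2 * (l 0 * β ^ 2 * l 2 + 1) +
          (1 - (l 2) ^ 2) * (1 - l 0 * β ^ 2 * l 2) * (l 3 / l 4)) lam0 := by
      simp only [div_eq_mul_inv]
      exact (((h0 1).pow 2).mul
          ((((h0 0).mul (differentiableAt_const _)).mul (h0 2)).add (differentiableAt_const _))).add
        ((((differentiableAt_const _).sub ((h0 2).pow 2)).mul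
            ((differentiableAt_const _).sub (((h0 0).mul (differentiableAt_const _)).mul (h0 2)))).mul
          ((h0 3).mul ((h0 4).inv hτ.ne')))
    have hnum : DifferentiableAt ℝ (fun l : EuclideanSpace ℝ (Fin 5) =>
        (l 1) ^ 2 * l 2 * (1 - (l 0) ^ 2 * β ^ 4)) lam0 :=
      (((h0 1).pow 2).mul (h0 2)).mul
        ((differentiableAt_const _).sub (((h0 0).pow 2).mul (differentiableAt_const _)))
    have hq : DifferentiableAt ℝ (fun l : EuclideanSpace ℝ (Fin 5) =>
        (l 1) ^ 2 * l 2 * (1 - (l 0) ^ 2 * β ^ 4) /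
          ((l 1) ^ 2 * (l 0 * β ^ 2 * l 2 + 1) +
            (1 - (l 2) ^ 2) * (1 - l 0 * β ^ 2 * l 2) * (l 3 / l 4))) lam0 := by
      simp only [div_eq_mul_inv]
      exact hnum.mul (hden.inv hD)
    exact ((h0 0).mul (differentiableAt_const _)).add hq
  rcases eq_or_ne (lam0 2) 0 with hr0 | hr0
  · -- ρ = 0 : use the partial derivative in the ρ direction
    refine ⟨(lam0 1) ^ 2 * (1 - (lam0 0) ^ 2) / ((lam0 1) ^ 2 + lam0 3 / lam0 4),
      div_pos (mul_pos hψ2 (by linarith)) (by positivity), ?_⟩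
    intro β hβ
    have hb4 : β ^ 4 ≤ 1 := by
      calc β ^ 4 ≤ 1 ^ 4 := by gcongr; exacts [hβ.1, hβ.2]
        _ = 1 := one_pow 4
    have hb4' : (0:ℝ) ≤ β ^ 4 := by positivity
    have hApos : 0 < 1 - (lam0 0) ^ 2 * β ^ 4 := by nlinarith [sq_nonneg (lam0 0)]
    have hD0 : (0:ℝ) < (lam0 1) ^ 2 + lam0 3 / lam0 4 := by positivity
    have hfun : (fun t : ℝ => Ffun β (lam0 + t • EuclideanSpace.single 2 (1:ℝ)))
        = fun t : ℝ => lam0 0 * β ^ 2 +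
            ((lam0 1) ^ 2 * t * (1 - (lam0 0) ^ 2 * β ^ 4)) /
              ((lam0 1) ^ 2 * (lam0 0 * β ^ 2 * t + 1) +
                (1 - t ^ 2) * (1 - lam0 0 * β ^ 2 * t) * (lam0 3 / lam0 4)) := by
      funext t
      simp [Ffun, PiLp.add_apply, PiLp.smul_apply, EuclideanSpace.single_apply, smul_eq_mul, hr0]
    have hn : HasDerivAt (fun t : ℝ => (lam0 1) ^ 2 * t * (1 - (lam0 0) ^ 2 * β ^ 4))
        ((lam0 1) ^ 2 * (1 - (lam0 0) ^ 2 * β ^ 4)) 0 := by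
      simpa using ((hasDerivAt_id (0:ℝ)).const_mul ((lam0 1) ^ 2)).mul_const
        (1 - (lam0 0) ^ 2 * β ^ 4)
    have h1 : HasDerivAt (fun t : ℝ => lam0 0 * β ^ 2 * t + 1) (lam0 0 * β ^ 2) 0 := by
      simpa using ((hasDerivAt_id (0:ℝ)).const_mul (lam0 0 * β ^ 2)).add_const 1
    have h2 := h1.const_mul ((lam0 1) ^ 2)
    have h3 : HasDerivAt (fun t : ℝ => 1 - t ^ 2) (-(2 * 0 ^ 1)) 0 := by
      simpa using (hasDerivAt_pow 2 (0:ℝ)).const_sub 1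
    have h4 : HasDerivAt (fun t : ℝ => 1 - lam0 0 * β ^ 2 * t) (-(lam0 0 * β ^ 2)) 0 := by
      simpa using ((hasDerivAt_id (0:ℝ)).const_mul (lam0 0 * β ^ 2)).const_sub 1
    have hd := h2.add ((h3.mul h4).mul_const (lam0 3 / lam0 4))
    have hdne : ((lam0 1) ^ 2 * (lam0 0 * β ^ 2 * 0 + 1) +
        (1 - 0 ^ 2) * (1 - lam0 0 * β ^ 2 * 0) * (lam0 3 / lam0 4)) ≠ 0 := by
      norm_num
      positivity
    have H := (hn.div hd hdne).const_add (lam0 0 * β ^ 2)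
    have HE : HasDerivAt (fun t : ℝ => Ffun β (lam0 + t • EuclideanSpace.single 2 (1:ℝ)))
        ((lam0 1) ^ 2 * (1 - (lam0 0) ^ 2 * β ^ 4) / ((lam0 1) ^ 2 + lam0 3 / lam0 4)) 0 := by
      rw [hfun]
      refine (H.congr_deriv ?_).congr_of_eventuallyEq (Filter.Eventually.of_forall fun _ => rfl)
      symm
      simp only [Pi.add_apply, Pi.mul_apply]
      have hne : ((lam0 1) ^ 2 + lam0 3 / lam0 4) ≠ 0 := hD0.ne'
      rw [div_eq_div_iff hne (pow_ne_zero 2 hdne)]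
      ring
    refine le_trans ?_ (grad_lb (hdiff β hβ) 2 HE)
    rw [abs_of_pos (div_pos (mul_pos hψ2 hApos) hD0)]
    gcongr
    nlinarith [sq_nonneg (lam0 0)]
  · -- ρ ≠ 0 : use the partial derivative in the ψ direction
    have habs : 0 < |lam0 1 * lam0 2| := abs_pos.mpr (mul_ne_zero hψ hr0)
    refine ⟨2 * |lam0 1 * lam0 2| *
        ((1 - (lam0 0) ^ 2) * ((1 - (lam0 2) ^ 2) * (1 - |lam0 0 * lam0 2|) * (lam0 3 / lam0 4))) /
        (2 * ((lam0 1) ^ 2 + lam0 3 / lam0 4)) ^ 2, ?_, ?_⟩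
    · apply div_pos
      · apply mul_pos (by positivity)
        apply mul_pos (by linarith)
        apply mul_pos (mul_pos (by linarith) (by linarith)) hst
      · positivity
    intro β hβ
    have hb2 : β ^ 2 ≤ 1 := by
      calc β ^ 2 ≤ 1 ^ 2 := by gcongr; exacts [hβ.1, hβ.2]
        _ = 1 := one_pow 2
    have hb4 : β ^ 4 ≤ 1 := by
      calc β ^ 4 ≤ 1 ^ 4 := by gcongr; exacts [hβ.1, hβ.2]
        _ = 1 := one_pow 4
    obtain ⟨hx1, hx2⟩ := abs_lt.mp (lt_of_le_of_lt (hbb β hβ) hdr)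
    have hD := hDpos β hβ
    have hApos : 0 < 1 - (lam0 0) ^ 2 * β ^ 4 := by nlinarith [sq_nonneg (lam0 0)]
    have hfun : (fun t : ℝ => Ffun β (lam0 + t • EuclideanSpace.single 1 (1:ℝ)))
        = fun t : ℝ => lam0 0 * β ^ 2 +
            ((lam0 1 + t) ^ 2 * lam0 2 * (1 - (lam0 0) ^ 2 * β ^ 4)) /
              ((lam0 1 + t) ^ 2 * (lam0 0 * β ^ 2 * lam0 2 + 1) +
                (1 - (lam0 2) ^ 2) * (1 - lam0 0 * β ^ 2 * lam0 2) * (lam0 3 / lam0 4)) := by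
      funext t
      simp [Ffun, PiLp.add_apply, PiLp.smul_apply, EuclideanSpace.single_apply, smul_eq_mul]
    have hb : HasDerivAt (fun t : ℝ => lam0 1 + t) 1 0 := by
      simpa using (hasDerivAt_id (0:ℝ)).const_add (lam0 1)
    have hn := ((hb.pow 2).mul_const (lam0 2)).mul_const (1 - (lam0 0) ^ 2 * β ^ 4)
    have hd := ((hb.pow 2).mul_const (lam0 0 * β ^ 2 * lam0 2 + 1)).add_const
      ((1 - (lam0 2) ^ 2) * (1 - lam0 0 * β ^ 2 * lam0 2) * (lam0 3 / lam0 4))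
    have hdne : ((lam0 1 + 0) ^ 2 * (lam0 0 * β ^ 2 * lam0 2 + 1) +
        (1 - (lam0 2) ^ 2) * (1 - lam0 0 * β ^ 2 * lam0 2) * (lam0 3 / lam0 4)) ≠ 0 := by
      simpa using hD.ne'
    have H := (hn.div hd hdne).const_add (lam0 0 * β ^ 2)
    have HE : HasDerivAt (fun t : ℝ => Ffun β (lam0 + t • EuclideanSpace.single 1 (1:ℝ)))
        (2 * (lam0 1 * lam0 2) *
          ((1 - (lam0 0) ^ 2 * β ^ 4) *
            ((1 - (lam0 2) ^ 2) * (1 - lam0 0 * β ^ 2 * lam0 2) * (lam0 3 / lam0 4))) /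
          ((lam0 1) ^ 2 * (lam0 0 * β ^ 2 * lam0 2 + 1) +
            (1 - (lam0 2) ^ 2) * (1 - lam0 0 * β ^ 2 * lam0 2) * (lam0 3 / lam0 4)) ^ 2) 0 := by
      rw [hfun]
      refine (H.congr_deriv ?_).congr_of_eventuallyEq (Filter.Eventually.of_forall fun _ => rfl)
      symm
      simp only [Pi.pow_apply]
      ring
    refine le_trans ?_ (grad_lb (hdiff β hβ) 1 HE)
    have hXpos : 0 < (1 - (lam0 0) ^ 2 * β ^ 4) *
        ((1 - (lam0 2) ^ 2) * (1 - lam0 0 * β ^ 2 * lam0 2) * (lam0 3 / lam0 4)) :=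
      mul_pos hApos (mul_pos (mul_pos (by linarith) (by linarith)) hst)
    have habs2 : |2 * (lam0 1 * lam0 2) *
        ((1 - (lam0 0) ^ 2 * β ^ 4) *
          ((1 - (lam0 2) ^ 2) * (1 - lam0 0 * β ^ 2 * lam0 2) * (lam0 3 / lam0 4))) /
        ((lam0 1) ^ 2 * (lam0 0 * β ^ 2 * lam0 2 + 1) +
          (1 - (lam0 2) ^ 2) * (1 - lam0 0 * β ^ 2 * lam0 2) * (lam0 3 / lam0 4)) ^ 2|
        = 2 * |lam0 1 * lam0 2| *
          ((1 - (lam0 0) ^ 2 * β ^ 4) *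
            ((1 - (lam0 2) ^ 2) * (1 - lam0 0 * β ^ 2 * lam0 2) * (lam0 3 / lam0 4))) /
          ((lam0 1) ^ 2 * (lam0 0 * β ^ 2 * lam0 2 + 1) +
            (1 - (lam0 2) ^ 2) * (1 - lam0 0 * β ^ 2 * lam0 2) * (lam0 3 / lam0 4)) ^ 2 := by
      rw [abs_div, abs_of_pos (pow_pos hD 2), abs_mul, abs_mul, abs_of_pos hXpos]
      norm_num
    rw [habs2]
    have hDle : (lam0 1) ^ 2 * (lam0 0 * β ^ 2 * lam0 2 + 1) +
        (1 - (lam0 2) ^ 2) * (1 - lam0 0 * β ^ 2 * lam0 2) * (lam0 3 / lam0 4)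
        ≤ 2 * ((lam0 1) ^ 2 + lam0 3 / lam0 4) := by
      have t1 : (1 - (lam0 2) ^ 2) * (1 - lam0 0 * β ^ 2 * lam0 2) ≤ 2 := by nlinarith
      have t2 : (1 - (lam0 2) ^ 2) * (1 - lam0 0 * β ^ 2 * lam0 2) * (lam0 3 / lam0 4)
          ≤ 2 * (lam0 3 / lam0 4) := mul_le_mul_of_nonneg_right t1 hst.le
      have t3 : (lam0 1) ^ 2 * (lam0 0 * β ^ 2 * lam0 2 + 1) ≤ (lam0 1) ^ 2 * 2 :=
        mul_le_mul_of_nonneg_left (by linarith) hψ2.le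
      linarith
    have hinner : (1 - (lam0 2) ^ 2) * (1 - |lam0 0 * lam0 2|) * (lam0 3 / lam0 4)
        ≤ (1 - (lam0 2) ^ 2) * (1 - lam0 0 * β ^ 2 * lam0 2) * (lam0 3 / lam0 4) := by
      apply mul_le_mul_of_nonneg_right _ hst.le
      apply mul_le_mul_of_nonneg_left _ (by linarith : (0:ℝ) ≤ 1 - (lam0 2) ^ 2)
      linarith [hbb β hβ, le_abs_self (lam0 0 * β ^ 2 * lam0 2)]
    have hinner0 : 0 ≤ (1 - (lam0 2) ^ 2) * (1 - |lam0 0 * lam0 2|) * (lam0 3 / lam0 4) :=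
      mul_nonneg (mul_nonneg (by linarith) (by linarith)) hst.le
    have hac : 2 * |lam0 1 * lam0 2| *
        ((1 - (lam0 0) ^ 2) * ((1 - (lam0 2) ^ 2) * (1 - |lam0 0 * lam0 2|) * (lam0 3 / lam0 4)))
        ≤ 2 * |lam0 1 * lam0 2| *
          ((1 - (lam0 0) ^ 2 * β ^ 4) *
            ((1 - (lam0 2) ^ 2) * (1 - lam0 0 * β ^ 2 * lam0 2) * (lam0 3 / lam0 4))) := by
      apply mul_le_mul_of_nonneg_left _ (by positivity)
      apply mul_le_mul _ hinner hinner0 hApos.le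
      nlinarith [sq_nonneg (lam0 0)]
    exact div_le_div₀ (mul_nonneg (by positivity) hXpos.le) hac (pow_pos hD 2)
      (pow_le_pow_left₀ hD.le hDle 2)
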